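/- For every ξ ∈ ℝ²∖{0}, the matrices s(ξ) := (1/(2μ|ξ|))·(m·D(ξ) − I₃) and r(ξ) := 2μ|ξ|·(−((λ+μ)/(λ+3μ))·D(ξ) − I₃) satisfy s(ξ)·r(ξ) = I₃. (The principal symbol of the inverse of the elastic single layer potential is r(ξ).) -/

import Mathlib

/-- The block-diagonal matrix `D(ξ) = diag(Λ(ξ), 1)`, `Λ(ξ)_{ij} = ξ_i ξ_j / |ξ|²`. -/
noncomputable def dMat (ξ : Fin 2 → ℝ) : Matrix (Fin 3) (Fin 3) ℝ :=
  Matrix.of fun p q =>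
    (![ξ 0, ξ 1, 0] p * ![ξ 0, ξ 1, 0] q) / (ξ 0 ^ 2 + ξ 1 ^ 2) +
      (if p = 2 ∧ q = 2 then 1 else 0)

lemma dMat_idem (ξ : Fin 2 → ℝ) (hs : 0 < ξ 0 ^ 2 + ξ 1 ^ 2) :
    dMat ξ * dMat ξ = dMat ξ := by
  have hs' : ξ 0 ^ 2 + ξ 1 ^ 2 ≠ 0 := hs.ne'
  ext i j
  fin_cases i <;> fin_cases j <;>
    simp [dMat, Matrix.mul_apply, Fin.sum_univ_three] <;> field_simp <;> ring

/-- The principal symbol `r(ξ)` of the inverse of the elastic single layer potential is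
the inverse of its principal symbol `s(ξ)`: `s(ξ)·r(ξ) = I₃`. -/
theorem single_layer_inverse_symbol
    (lam mu : ℝ) (hmu : 0 < mu) (hlam2mu : 0 < lam + 2 * mu)
    (ξ : Fin 2 → ℝ) (hξ : ξ ≠ 0) :
    ((1 / (2 * mu * Real.sqrt (ξ 0 ^ 2 + ξ 1 ^ 2))) •
        (((lam + mu) / (2 * (lam + 2 * mu))) • dMat ξ - 1)) *
      ((2 * mu * Real.sqrt (ξ 0 ^ 2 + ξ 1 ^ 2)) •
        (-((lam + mu) / (lam + 3 * mu)) • dMat ξ - 1)) = 1 := by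
  have h01 : ξ 0 ≠ 0 ∨ ξ 1 ≠ 0 := by
    by_contra h
    push_neg at h
    exact hξ (funext fun i => by fin_cases i <;> simp [h.1, h.2])
  have hs : 0 < ξ 0 ^ 2 + ξ 1 ^ 2 := by
    rcases h01 with h | h
    · have := pow_pos (abs_pos.mpr h) 2
      rw [sq_abs] at this; positivity
    · have := pow_pos (abs_pos.mpr h) 2
      rw [sq_abs] at this; positivity
  have hsqpos : 0 < Real.sqrt (ξ 0 ^ 2 + ξ 1 ^ 2) := Real.sqrt_pos.mpr hs
  have hlam3mu : 0 < lam + 3 * mu := by linarith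
  set a := (lam + mu) / (2 * (lam + 2 * mu)) with ha
  set b := -((lam + mu) / (lam + 3 * mu)) with hb
  have hab : a * b = a + b := by
    rw [ha, hb]
    rw [mul_neg, div_mul_div_comm, ← sub_eq_add_neg, div_sub_div _ _ (by positivity) (by positivity), neg_div', div_eq_div_iff (by positivity) (by positivity)]
    ring
  rw [smul_mul_smul_comm]
  have hc : 1 / (2 * mu * Real.sqrt (ξ 0 ^ 2 + ξ 1 ^ 2)) *
      (2 * mu * Real.sqrt (ξ 0 ^ 2 + ξ 1 ^ 2)) = 1 := by
    field_simp
  rw [hc, one_smul, sub_mul, mul_sub, mul_sub, smul_mul_smul_comm, dMat_idem ξ hs, hab,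
    mul_one, one_mul, add_smul]
  simp
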